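/- Let f : ℝ^d → ℝ be twice continuously differentiable and L-smooth, and let D be a constant such that for all n ≥ 1 and all z₁, ..., zₙ ∈ ℝ^d, ‖∇²f(z₁) - (1/n) ∑ⱼ ∇²f(zⱼ)‖ ≤ D (operator norm). Then the Functional (L_A, L_B) Inequality holds with L_A = √2 · D and L_B = √2 · L: for all n ≥ 1, x, u₁, ..., uₙ, ‖(1/n) ∑ᵢ (∇f(x+uᵢ) - ∇f(x))‖² ≤ 2D² (1/n) ∑ᵢ ‖uᵢ‖² + 2L² ‖(1/n) ∑ᵢ uᵢ‖². -/

import Mathlib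

open scoped BigOperators
open Set

set_option maxHeartbeats 1000000 in
set_option synthInstance.maxHeartbeats 200000 in
theorem stmt3 (d : ℕ) (f : EuclideanSpace ℝ (Fin d) → ℝ) (L D : ℝ)
    (hL : 0 ≤ L) (hD : 0 ≤ D)
    (hC2 : ContDiff ℝ 2 f)
    (hsmooth : ∀ x y : EuclideanSpace ℝ (Fin d),
      ‖gradient f x - gradient f y‖ ≤ L * ‖x - y‖)
    (hHess : ∀ (n : ℕ) (hn : 1 ≤ n) (z : Fin n → EuclideanSpace ℝ (Fin d)),
      ‖fderiv ℝ (gradient f) (z ⟨0, hn⟩)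
        - (n : ℝ)⁻¹ • ∑ j, fderiv ℝ (gradient f) (z j)‖ ≤ D) :
    ∀ (n : ℕ), 1 ≤ n → ∀ (x : EuclideanSpace ℝ (Fin d))
      (u : Fin n → EuclideanSpace ℝ (Fin d)),
      ‖(n : ℝ)⁻¹ • ∑ i, (gradient f (x + u i) - gradient f x)‖ ^ 2
        ≤ 2 * D ^ 2 * ((n : ℝ)⁻¹ * ∑ i, ‖u i‖ ^ 2)
          + 2 * L ^ 2 * ‖(n : ℝ)⁻¹ • ∑ i, u i‖ ^ 2 := by
  intro n hn x u
  set g := gradient f with hg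
  have hgdiff : ContDiff ℝ 1 g := by
    have h1 : ContDiff ℝ 1 (fderiv ℝ f) := hC2.fderiv_right (by norm_num)
    have h2 : g = fun y => (InnerProductSpace.toDual ℝ
        (EuclideanSpace ℝ (Fin d))).symm (fderiv ℝ f y) := rfl
    rw [h2]
    exact (InnerProductSpace.toDual ℝ (EuclideanSpace ℝ (Fin d))).symm.contDiff.comp h1
  have hgd : Differentiable ℝ g := hgdiff.differentiable one_ne_zero
  -- operator norm of Hessian ≤ L
  have hHL : ∀ z, ‖fderiv ℝ g z‖ ≤ L := by
    intro z
    have hlip : LipschitzWith (Real.toNNReal L) g := by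
      apply LipschitzWith.of_dist_le_mul
      intro a b
      rw [dist_eq_norm, dist_eq_norm, Real.coe_toNNReal L hL]
      exact hsmooth a b
    have := (hgd z).hasFDerivAt.le_of_lipschitz hlip
    rwa [Real.coe_toNNReal L hL] at this
  have hnpos : (0:ℝ) < n := by exact_mod_cast hn
  have hn0 : (n:ℝ) ≠ 0 := ne_of_gt hnpos
  have hninv : (0:ℝ) ≤ (n:ℝ)⁻¹ := by positivity
  set ub := (n : ℝ)⁻¹ • ∑ i, u i with hub
  set φ : ℝ → EuclideanSpace ℝ (Fin d) :=
    fun t => (n : ℝ)⁻¹ • ∑ i, g (x + t • u i) with hφ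
  set φ' : ℝ → EuclideanSpace ℝ (Fin d) :=
    fun t => (n : ℝ)⁻¹ • ∑ i, fderiv ℝ g (x + t • u i) (u i) with hφ'
  have hder : ∀ t : ℝ, HasDerivAt φ (φ' t) t := by
    intro t
    have h1 : ∀ i : Fin n, HasDerivAt (fun s : ℝ => g (x + s • u i))
        (fderiv ℝ g (x + t • u i) (u i)) t := by
      intro i
      have hline : HasDerivAt (fun s : ℝ => x + s • u i) (u i) t := by
        simpa using ((hasDerivAt_id t).smul_const (u i)).const_add x
      exact ((hgd (x + t • u i)).hasFDerivAt.comp_hasDerivAt t hline)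
    have h2 := (HasDerivAt.sum (u := Finset.univ) (fun i _ => h1 i)).const_smul ((n : ℝ)⁻¹)
    have hφfun : φ = (n : ℝ)⁻¹ • ∑ i, fun s : ℝ => g (x + s • u i) := by
      funext s
      simp [hφ, Finset.sum_apply]
    rw [hφfun]
    exact h2
  set A : ℝ := (n : ℝ)⁻¹ * ∑ i, ‖u i‖ with hA
  set C : ℝ := D * A + L * ‖ub‖ with hC
  have hbound : ∀ t : ℝ, ‖φ' t‖ ≤ C := by
    intro t
    set M := (n : ℝ)⁻¹ • ∑ j, fderiv ℝ g (x + t • u j) with hM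
    have hMD : ∀ i : Fin n, ‖fderiv ℝ g (x + t • u i) - M‖ ≤ D := by
      intro i
      have key := hHess n hn (fun j => x + t • u ((Equiv.swap (⟨0, hn⟩ : Fin n) i) j))
      have e1 : x + t • u ((Equiv.swap (⟨0, hn⟩ : Fin n) i) ⟨0, hn⟩) = x + t • u i := by
        rw [Equiv.swap_apply_left]
      have e2 : ∑ j, fderiv ℝ g (x + t • u ((Equiv.swap (⟨0, hn⟩ : Fin n) i) j))
          = ∑ j, fderiv ℝ g (x + t • u j) :=
        Equiv.sum_comp (Equiv.swap (⟨0, hn⟩ : Fin n) i)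
          (fun j => fderiv ℝ g (x + t • u j))
      rw [e1, e2] at key
      rw [hM]
      exact key
    have hML : ‖M‖ ≤ L := by
      calc ‖M‖ ≤ (n:ℝ)⁻¹ * ∑ j, ‖fderiv ℝ g (x + t • u j)‖ := by
            rw [hM, norm_smul, norm_inv, Real.norm_natCast]
            gcongr
            exact norm_sum_le _ _
        _ ≤ (n:ℝ)⁻¹ * ∑ _j : Fin n, L := by
            gcongr with j
            exact hHL _
        _ = L := by
            rw [Finset.sum_const, Finset.card_univ, Fintype.card_fin, nsmul_eq_mul]
            field_simp
    have hsplit : φ' t = (n : ℝ)⁻¹ • ∑ i, (fderiv ℝ g (x + t • u i) - M) (u i) + M ub := by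
      rw [hφ', hub]
      simp only [ContinuousLinearMap.sub_apply, Finset.sum_sub_distrib, smul_sub,
        map_smul, map_sum]
      abel
    rw [hsplit]
    calc ‖(n : ℝ)⁻¹ • ∑ i, (fderiv ℝ g (x + t • u i) - M) (u i) + M ub‖
        ≤ ‖(n : ℝ)⁻¹ • ∑ i, (fderiv ℝ g (x + t • u i) - M) (u i)‖ + ‖M ub‖ :=
          norm_add_le _ _
      _ ≤ (n:ℝ)⁻¹ * ∑ i, (D * ‖u i‖) + L * ‖ub‖ := by
          gcongr
          · calc ‖(n : ℝ)⁻¹ • ∑ i, (fderiv ℝ g (x + t • u i) - M) (u i)‖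
                = (n:ℝ)⁻¹ * ‖∑ i, (fderiv ℝ g (x + t • u i) - M) (u i)‖ := by
                  rw [norm_smul, norm_inv, Real.norm_natCast]
              _ ≤ (n:ℝ)⁻¹ * ∑ i, (D * ‖u i‖) := by
                  refine mul_le_mul_of_nonneg_left ?_ hninv
                  refine (norm_sum_le _ _).trans (Finset.sum_le_sum fun i _ => ?_)
                  exact ((fderiv ℝ g (x + t • u i) - M).le_opNorm (u i)).trans
                    (mul_le_mul_of_nonneg_right (hMD i) (norm_nonneg _))
          · exact le_trans (M.le_opNorm ub)
              (mul_le_mul_of_nonneg_right hML (norm_nonneg _))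
      _ = C := by rw [← Finset.mul_sum, hC, hA]; ring
  -- mean value inequality on [0,1]
  have hmv : ‖φ 1 - φ 0‖ ≤ C := by
    have := norm_image_sub_le_of_norm_deriv_le_segment'
      (f := φ) (f' := φ') (a := 0) (b := 1) (C := C)
      (fun t _ => (hder t).hasDerivWithinAt)
      (fun t _ => hbound t) 1 (right_mem_Icc.2 zero_le_one)
    simpa using this
  have hveq : (n : ℝ)⁻¹ • ∑ i, (g (x + u i) - g x) = φ 1 - φ 0 := by
    simp [hφ, Finset.sum_sub_distrib, smul_sub]
  have hnorm : ‖(n : ℝ)⁻¹ • ∑ i, (g (x + u i) - g x)‖ ≤ C := by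
    rw [hveq]; exact hmv
  have hsq : ‖(n : ℝ)⁻¹ • ∑ i, (g (x + u i) - g x)‖ ^ 2 ≤ C ^ 2 :=
    pow_le_pow_left₀ (norm_nonneg _) hnorm 2
  refine hsq.trans ?_
  have hCS : A ^ 2 ≤ (n : ℝ)⁻¹ * ∑ i, ‖u i‖ ^ 2 := by
    have h : (∑ i, ‖u i‖) ^ 2 ≤ (n:ℝ) * ∑ i, ‖u i‖ ^ 2 := by
      have h := sq_sum_le_card_mul_sum_sq (s := Finset.univ) (f := fun i : Fin n => ‖u i‖)
      simp only [Finset.card_univ, Fintype.card_fin] at h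
      exact_mod_cast h
    have h2 : A ^ 2 = ((n:ℝ)⁻¹)^2 * (∑ i, ‖u i‖)^2 := by rw [hA]; ring
    rw [h2]
    calc ((n:ℝ)⁻¹)^2 * (∑ i, ‖u i‖)^2 ≤ ((n:ℝ)⁻¹)^2 * ((n:ℝ) * ∑ i, ‖u i‖^2) := by
          gcongr
      _ = (n : ℝ)⁻¹ * ∑ i, ‖u i‖ ^ 2 := by
          field_simp
  have h1 : C ^ 2 ≤ 2 * D^2 * A^2 + 2 * L^2 * ‖ub‖^2 := by
    rw [hC]; nlinarith [sq_nonneg (D * A - L * ‖ub‖)]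
  refine h1.trans ?_
  nlinarith [hCS, sq_nonneg D]
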